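/- Let Λ : ℝ × (0,∞) → (0,∞) be a positive continuous function such that ∫_ℝ Λ(ξ,ζ) exp(−cosh(ξ)/ζ) dξ < ∞ for every ζ > 0, let h_Λ(ξ,ζ) be defined for each ζ > 0 by ∫_{−∞}^{h_Λ(ξ,ζ)} Λ(x,ζ) exp(−cosh(x)/ζ) dx = ∫_ξ^{∞} Λ(x,ζ) exp(−cosh(x)/ζ) dx, and define 𝒯_Λ : C([0,t];ℝ) → C([0,t];ℝ) by 𝒯_Λ(φ)(s) := T_{φ_t − h_Λ(φ_t, Z_t(φ))}(φ)(s), 0 ≤ s ≤ t. Then 𝒯_Λ is an involution: 𝒯_Λ ∘ 𝒯_Λ = Id on C([0,t];ℝ). -/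

import Mathlib

open MeasureTheory ProbabilityTheory Set

/-- `A_s(φ) = ∫_0^s e^{2 φ_u} du`. -/
noncomputable def pA (φ : ℝ → ℝ) (s : ℝ) : ℝ := ∫ u in (0:ℝ)..s, Real.exp (2 * φ u)

/-- `Z_s(φ) = e^{-φ_s} A_s(φ)`. -/
noncomputable def pZ (φ : ℝ → ℝ) (s : ℝ) : ℝ := Real.exp (-(φ s)) * pA φ s

/-- The anticipative transformation `T_z` on paths over `[0,t]`:
`T_z(φ)(s) = φ_s - log(1 + (A_s(φ)/A_t(φ)) (e^z - 1))`. -/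
noncomputable def pT (t z : ℝ) (φ : ℝ → ℝ) (s : ℝ) : ℝ :=
  φ s - Real.log (1 + (pA φ s / pA φ t) * (Real.exp z - 1))

variable {t : ℝ} {φ : ℝ → ℝ}

lemma hg_cont (hφ : ContinuousOn φ (Icc 0 t)) :
    ContinuousOn (fun u => Real.exp (2 * φ u)) (Icc 0 t) :=
  Real.continuous_exp.comp_continuousOn (continuousOn_const.mul hφ)

lemma hg_ii (ht : 0 ≤ t) (hφ : ContinuousOn φ (Icc 0 t)) {a b : ℝ}
    (ha : a ∈ Icc 0 t) (hb : b ∈ Icc 0 t) :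
    IntervalIntegrable (fun u => Real.exp (2 * φ u)) volume a b := by
  apply ContinuousOn.intervalIntegrable
  exact (hg_cont hφ).mono (uIcc_subset_Icc ha hb)

lemma pA_nonneg (ht : 0 ≤ t) (hφ : ContinuousOn φ (Icc 0 t)) {s : ℝ} (hs : s ∈ Icc 0 t) :
    0 ≤ pA φ s :=
  intervalIntegral.integral_nonneg hs.1 (fun u _ => (Real.exp_pos _).le)

lemma pA_le (ht : 0 ≤ t) (hφ : ContinuousOn φ (Icc 0 t)) {s : ℝ} (hs : s ∈ Icc 0 t) :
    pA φ s ≤ pA φ t := by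
  have h1 := hg_ii ht hφ (left_mem_Icc.2 ht) (right_mem_Icc.2 ht)
  have h2 := hg_ii ht hφ (left_mem_Icc.2 ht) hs
  have key : pA φ t - pA φ s = ∫ u in s..t, Real.exp (2 * φ u) :=
    intervalIntegral.integral_interval_sub_left h1 h2
  have : 0 ≤ ∫ u in s..t, Real.exp (2 * φ u) :=
    intervalIntegral.integral_nonneg hs.2 (fun u _ => (Real.exp_pos _).le)
  linarith

lemma pA_pos (ht : 0 < t) (hφ : ContinuousOn φ (Icc 0 t)) : 0 < pA φ t :=
  intervalIntegral.intervalIntegral_pos_of_pos_on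
    (hg_ii ht.le hφ (left_mem_Icc.2 ht.le) (right_mem_Icc.2 ht.le))
    (fun u _ => Real.exp_pos _) ht

lemma denom_pos (ht : 0 < t) (hφ : ContinuousOn φ (Icc 0 t)) (z : ℝ) {s : ℝ}
    (hs : s ∈ Icc 0 t) : 0 < 1 + (pA φ s / pA φ t) * (Real.exp z - 1) := by
  set r := pA φ s / pA φ t with hr
  have hAt := pA_pos ht hφ
  have hr0 : 0 ≤ r := div_nonneg (pA_nonneg ht.le hφ hs) hAt.le
  have hr1 : r ≤ 1 := (div_le_one hAt).2 (pA_le ht.le hφ hs)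
  have hc : -1 < Real.exp z - 1 := by have := Real.exp_pos z; linarith
  nlinarith [mul_nonneg hr0 (by linarith : (0:ℝ) ≤ Real.exp z - 1 + 1)]

lemma pA_cont (ht : 0 < t) (hφ : ContinuousOn φ (Icc 0 t)) :
    ContinuousOn (pA φ) (Icc 0 t) := by
  have := intervalIntegral.continuousOn_primitive_interval'
    (μ := volume) (a := 0) (b₁ := 0) (b₂ := t) (f := fun u => Real.exp (2 * φ u))
    (hg_ii ht.le hφ (left_mem_Icc.2 ht.le) (right_mem_Icc.2 ht.le)) left_mem_uIcc
  simp only [uIcc_of_le ht.le] at this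
  exact this

lemma pA_hasDerivAt (ht : 0 < t) (hφ : ContinuousOn φ (Icc 0 t)) {u : ℝ}
    (hu : u ∈ Ioo (0:ℝ) t) : HasDerivAt (pA φ) (Real.exp (2 * φ u)) u := by
  apply intervalIntegral.integral_hasDerivAt_right
    (hg_ii ht.le hφ (left_mem_Icc.2 ht.le) (Ioo_subset_Icc_self hu))
  · exact ((hg_cont hφ).mono Ioo_subset_Icc_self).stronglyMeasurableAtFilter isOpen_Ioo u hu
  · exact (hg_cont hφ).continuousAt (Icc_mem_nhds hu.1 hu.2)

lemma pA_pT_eq (ht : 0 < t) (hφ : ContinuousOn φ (Icc 0 t)) (z : ℝ) {s : ℝ}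
    (hs : s ∈ Icc 0 t) :
    pA (pT t z φ) s = pA φ s / (1 + (pA φ s / pA φ t) * (Real.exp z - 1)) := by
  set c := Real.exp z - 1 with hc
  set A := pA φ with hA
  have hAt : 0 < A t := pA_pos ht hφ
  set D : ℝ → ℝ := fun u => 1 + (A u / A t) * c with hD
  have hDpos : ∀ u ∈ Icc 0 t, 0 < D u := fun u hu => denom_pos ht hφ z hu
  set G : ℝ → ℝ := fun u => A u / D u with hG
  have hsub : Icc (0:ℝ) s ⊆ Icc 0 t := Icc_subset_Icc le_rfl hs.2
  have hDcont : ContinuousOn D (Icc 0 t) := by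
    exact continuousOn_const.add (((pA_cont ht hφ).div_const _).mul continuousOn_const)
  have hGcont : ContinuousOn G (Icc 0 s) :=
    ((pA_cont ht hφ).mono hsub).div (hDcont.mono hsub)
      (fun u hu => (hDpos u (hsub hu)).ne')
  have hGderiv : ∀ u ∈ Ioo 0 s, HasDerivAt G (Real.exp (2 * φ u) / (D u * D u)) u := by
    intro u hu
    have hu' : u ∈ Ioo 0 t := ⟨hu.1, lt_of_lt_of_le hu.2 hs.2⟩
    have hAd := pA_hasDerivAt ht hφ hu'
    have hDd : HasDerivAt D (Real.exp (2 * φ u) / A t * c) u := by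
      exact (((hAd.div_const (A t)).mul_const c).const_add 1)
    have hDu : D u ≠ 0 := (hDpos u (Ioo_subset_Icc_self hu')).ne'
    have := hAd.div hDd hDu
    convert this using 1
    case e'_4 => rfl
    case e'_5 => rfl
    case e'_8 => rfl
    rw [← hA]
    have h2 : Real.exp (2 * φ u) * D u - A u * (Real.exp (2 * φ u) / A t * c)
        = Real.exp (2 * φ u) := by
      rw [hD]; field_simp; ring
    rw [h2, pow_two]
  have hint : IntervalIntegrable (fun u => Real.exp (2 * φ u) / (D u * D u)) volume 0 s := by
    apply ContinuousOn.intervalIntegrable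
    rw [uIcc_of_le hs.1]
    exact ((hg_cont hφ).mono hsub).div
      ((hDcont.mono hsub).mul (hDcont.mono hsub))
      (fun u hu => (mul_pos (hDpos u (hsub hu)) (hDpos u (hsub hu))).ne')
  have hFTC := intervalIntegral.integral_eq_sub_of_hasDeriv_right_of_le hs.1
    hGcont
    (fun u hu => (hGderiv u hu).hasDerivWithinAt) hint
  have hA0 : A 0 = 0 := by simp [hA, pA]
  have hG0 : G 0 = 0 := by simp [hG, hA0]
  have hptwise : ∀ u ∈ Icc (0:ℝ) s,
      Real.exp (2 * pT t z φ u) = Real.exp (2 * φ u) / (D u * D u) := by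
    intro u hu
    have hDu : 0 < D u := hDpos u (hsub hu)
    have hpt : pT t z φ u = φ u - Real.log (D u) := rfl
    rw [hpt, mul_sub, Real.exp_sub, two_mul (Real.log (D u)), Real.exp_add,
      Real.exp_log hDu]
  have : pA (pT t z φ) s = ∫ u in (0:ℝ)..s, Real.exp (2 * φ u) / (D u * D u) := by
    rw [pA]
    apply intervalIntegral.integral_congr
    intro u hu
    rw [uIcc_of_le hs.1] at hu
    exact hptwise u hu
  rw [this, hFTC, hG0, sub_zero]


lemma h_invol {g : ℝ → ℝ} (hgpos : ∀ x, 0 < g x) (hgint : Integrable g) {h : ℝ → ℝ}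
    (hdef : ∀ ξ, (∫ x in Iic (h ξ), g x) = ∫ x in Ici ξ, g x) (ξ : ℝ) : h (h ξ) = ξ := by
  set F : ℝ → ℝ := fun a => ∫ x in Iic a, g x with hF
  have hmono : StrictMono F := by
    intro a b hab
    have : F b - F a = ∫ x in a..b, g x :=
      intervalIntegral.integral_Iic_sub_Iic hgint.integrableOn hgint.integrableOn
    have hpos : 0 < ∫ x in a..b, g x :=
      intervalIntegral.intervalIntegral_pos_of_pos_on
        hgint.intervalIntegrable (fun x _ => hgpos x) hab
    linarith
  have key : ∀ a, F (h a) + F a = ∫ x, g x := by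
    intro a
    have h3 : (∫ x in Ici a, g x) = (∫ x, g x) - F a := by
      have := intervalIntegral.integral_Iic_add_Ioi (b := a)
        hgint.integrableOn hgint.integrableOn
      rw [integral_Ici_eq_integral_Ioi]
      simp only [hF]
      linarith
    rw [hF]; simp only []; rw [hdef a, h3]; ring
  have k1 := key (h ξ)
  have k2 := key ξ
  have : F (h (h ξ)) = F ξ := by linarith
  exact hmono.injective this

lemma key_alg (As At ez : ℝ) (hAt : At ≠ 0) (hez : ez ≠ 0)
    (hDs : 1 + As / At * (ez - 1) ≠ 0) :
    1 + As / (1 + As / At * (ez - 1)) / (At / ez) * (ez⁻¹ - 1)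
      = 1 / (1 + As / At * (ez - 1)) := by
  have h1 : 1 + As / At * (ez - 1) = (At + As * (ez - 1)) / At := by field_simp
  have hW : At + As * (ez - 1) ≠ 0 := by
    intro h
    apply hDs
    rw [h1, h, zero_div]
  rw [h1]
  field_simp
  ring


/-- Let `Λ` be positive continuous with `∫_ℝ Λ(ξ,ζ) e^{-cosh ξ/ζ} dξ < ∞` for all `ζ > 0`,
let `h_Λ` satisfy the defining equation, and let
`𝒯_Λ(φ)(s) = T_{φ_t - h_Λ(φ_t, Z_t(φ))}(φ)(s)`.  Then `𝒯_Λ` is an involution on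
`C([0,t];ℝ)`: `𝒯_Λ ∘ 𝒯_Λ = Id`. -/
theorem TLambda_involution
    (t : ℝ) (ht : 0 < t) (Λ : ℝ × ℝ → ℝ)
    (hΛpos : ∀ ξ ζ : ℝ, 0 < ζ → 0 < Λ (ξ, ζ))
    (hΛcont : ContinuousOn Λ (univ ×ˢ Ioi (0:ℝ)))
    (hΛint : ∀ ζ : ℝ, 0 < ζ →
      Integrable (fun x : ℝ => Λ (x, ζ) * Real.exp (-Real.cosh x / ζ)))
    (hΛfun : ℝ × ℝ → ℝ)
    (hdef : ∀ ξ ζ : ℝ, 0 < ζ →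
      (∫ x in Iic (hΛfun (ξ, ζ)), Λ (x, ζ) * Real.exp (-Real.cosh x / ζ)) =
        ∫ x in Ici ξ, Λ (x, ζ) * Real.exp (-Real.cosh x / ζ))
    (TΛ : (ℝ → ℝ) → (ℝ → ℝ))
    (hTΛ : ∀ φ : ℝ → ℝ, TΛ φ = pT t (φ t - hΛfun (φ t, pZ φ t)) φ) :
    ∀ φ : ℝ → ℝ, ContinuousOn φ (Icc 0 t) →
      ∀ s ∈ Icc (0:ℝ) t, TΛ (TΛ φ) s = φ s := by
  intro φ hφ s hs
  have hAt : 0 < pA φ t := pA_pos ht hφ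
  set ζ := pZ φ t with hζdef
  have hζpos : 0 < ζ := mul_pos (Real.exp_pos _) hAt
  set z := φ t - hΛfun (φ t, ζ) with hz
  set c := Real.exp z - 1 with hc
  have hec : Real.exp z = 1 + c := by rw [hc]; ring
  set ψ := TΛ φ with hψ
  have hψ_eq : ψ = pT t z φ := by rw [hψ, hTΛ φ, ← hζdef, ← hz]
  have htt : t ∈ Icc (0:ℝ) t := right_mem_Icc.2 ht.le
  -- value at t
  have hψt : ψ t = φ t - z := by
    rw [hψ_eq]
    show φ t - Real.log (1 + (pA φ t / pA φ t) * (Real.exp z - 1)) = φ t - z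
    rw [div_self hAt.ne']
    have : (1:ℝ) + 1 * (Real.exp z - 1) = Real.exp z := by ring
    rw [this, Real.log_exp]
  -- A of ψ
  set Ds := 1 + (pA φ s / pA φ t) * c with hDs
  have hDspos : 0 < Ds := denom_pos ht hφ z hs
  have hAψs : pA ψ s = pA φ s / Ds := by rw [hψ_eq]; exact pA_pT_eq ht hφ z hs
  have hAψt : pA ψ t = pA φ t / Real.exp z := by
    rw [hψ_eq, pA_pT_eq ht hφ z htt, div_self hAt.ne', one_mul, ← hc, ← hec]
  have hAψtpos : 0 < pA ψ t := by rw [hAψt]; positivity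
  -- Z invariance
  have hζψ : pZ ψ t = ζ := by
    rw [pZ, hψt, hAψt, hζdef, pZ, neg_sub, Real.exp_sub]
    field_simp
    rw [← Real.exp_add, add_neg_cancel, Real.exp_zero]
  -- h involution
  have hinv : hΛfun (hΛfun (φ t, ζ), ζ) = φ t := by
    exact h_invol (g := fun x => Λ (x, ζ) * Real.exp (-Real.cosh x / ζ))
      (fun x => mul_pos (hΛpos x ζ hζpos) (Real.exp_pos _))
      (hΛint ζ hζpos) (h := fun ξ => hΛfun (ξ, ζ))
      (fun ξ => hdef ξ ζ hζpos) (φ t)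
  have hz2 : ψ t - hΛfun (ψ t, pZ ψ t) = -z := by
    rw [hζψ, hψt, hz]
    simp only [sub_sub_cancel]
    rw [hinv]
    ring
  -- final computation
  have hDs0 : 1 + pA φ s / pA φ t * (Real.exp z - 1) ≠ 0 := hDspos.ne'
  rw [hTΛ ψ, hz2, pT, hAψs, hAψt, Real.exp_neg, hDs, hc,
    key_alg (pA φ s) (pA φ t) (Real.exp z) hAt.ne' (Real.exp_ne_zero z) hDs0,
    one_div, Real.log_inv]
  have hψs : ψ s = φ s - Real.log Ds := by rw [hψ_eq]; rfl
  rw [hψs, hDs, hc]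
  ring
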